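/- arXiv:1803.11034 — 2 statements merged into one kernel-verified Lean document; each statement's English description precedes it below -/
import Mathlib

section
/- If {Δ_1, …, Δ_l} is a reduction of a distribution Δ of Σ, then I_Δ = ⋃_{i=1}^l I_{Δ_i} (equivalently, D_Δ = ⋂_{i=1}^l D_{Δ_i}). -/
/-- A *distribution* of the (finite) alphabet `α`: a family of non-empty,
pairwise incomparable (under set inclusion) sub-alphabets whose union is `α`.
Its size is `comps.ncard`. -/
structure Distr (α : Type) [Fintype α] where
  comps : Set (Set α)
  comps_nonempty : ∀ S ∈ comps, S.Nonempty
  comps_cover : ∀ a : α, ∃ S ∈ comps, a ∈ S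
  comps_incomp : ∀ S ∈ comps, ∀ T ∈ comps, S ≠ T → ¬ S ⊆ T

section Defs

variable {α : Type} [Fintype α]

/-- Natural projection `P_{Σ'}`: erase from a string all symbols not in `S`. -/
noncomputable def projA (S : Set α) (s : List α) : List α :=
  s.filter fun a => @decide (a ∈ S) (Classical.propDecidable _)

/-- `L` is decomposable with respect to `Δ`:
`L = ∥_i P_{Σ_i}(L) = ⋂_i P_{Σ_i}⁻¹(P_{Σ_i}(L))`. -/
def Decomposable (L : Set (List α)) (Δ : Distr α) : Prop :=
  L = ⋂ S ∈ Δ.comps, projA S ⁻¹' (projA S '' L)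

/-- The partial order `≤_Σ` on distributions: every component of `Δ` is
contained in some component of `Δ'`. -/
def DistLE (Δ Δ' : Distr α) : Prop :=
  ∀ S ∈ Δ.comps, ∃ T ∈ Δ'.comps, S ⊆ T

/-- `P` is a *reduction* of `Δ`. -/
def IsReduction (P : Set (Distr α)) (Δ : Distr α) : Prop :=
  2 ≤ P.ncard ∧
  (∀ Δ' ∈ P, Δ'.comps.ncard < Δ.comps.ncard) ∧
  (∀ L : Set (List α), Decomposable L Δ ↔ ∀ Δ' ∈ P, Decomposable L Δ')

/-- The maximal members (under set inclusion) of a family of sets. -/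
def MaximalMem {β : Type} (F : Set (Set β)) : Set (Set β) :=
  {S | S ∈ F ∧ ∀ T ∈ F, S ⊆ T → S = T}

/-- The dependence relation `D_Δ`. -/
def DepRel (Δ : Distr α) : Set (α × α) :=
  {p | ∃ S ∈ Δ.comps, p.1 ∈ S ∧ p.2 ∈ S}

/-- The independence relation `I_Δ = Σ × Σ − D_Δ`. -/
def IndepRel (Δ : Distr α) : Set (α × α) :=
  {p | ¬ ∃ S ∈ Δ.comps, p.1 ∈ S ∧ p.2 ∈ S}

/-- `Σ' ⊑ Δ`: `Σ'` is contained in some component of `Δ`. -/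
def SqSub (S : Set α) (Δ : Distr α) : Prop :=
  ∃ T ∈ Δ.comps, S ⊆ T

/-- `Δ` is the greatest lower bound of the family `D` with respect to `≤_Σ`. -/
def IsGLBFam {l : ℕ} (D : Fin l → Distr α) (Δ : Distr α) : Prop :=
  (∀ i, DistLE Δ (D i)) ∧
  ∀ Δ''' : Distr α, (∀ i, DistLE Δ''' (D i)) → DistLE Δ''' Δ

/-- `Δ'` is *merged* from `Δ`: `Δ' ≠ (Σ)` and `Δ'` is obtained from a
partition of the components of `Δ` having at least one block of size ≥ 2 by
taking the unions over the blocks and keeping only the maximal resulting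
sub-alphabets. -/
def MergedFrom (Δ' Δ : Distr α) : Prop :=
  Δ'.comps ≠ {Set.univ} ∧
  ∃ part : Set (Set (Set α)),
    (∀ B ∈ part, B.Nonempty) ∧
    (∀ B ∈ part, B ⊆ Δ.comps) ∧
    (∀ B ∈ part, ∀ C ∈ part, B ≠ C → Disjoint B C) ∧
    (∀ S ∈ Δ.comps, ∃ B ∈ part, S ∈ B) ∧
    (∃ B ∈ part, ∃ S ∈ B, ∃ T ∈ B, S ≠ T) ∧
    Δ'.comps = MaximalMem {U : Set α | ∃ B ∈ part, U = ⋃₀ B}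

/-- Membership in the search space `S_Δ`: a set of distributions merged from
`Δ` that are pairwise `≤_Σ`-incomparable. -/
def MemS (Δ : Distr α) (P : Set (Distr α)) : Prop :=
  (∀ Δ' ∈ P, MergedFrom Δ' Δ) ∧
  ∀ Δ₁ ∈ P, ∀ Δ₂ ∈ P, Δ₁ ≠ Δ₂ → ¬ DistLE Δ₁ Δ₂

/-- The ordering `≤_Δ` on sets of distributions: every member of `Q` has a
member of `P` below it with respect to `≤_Σ`. -/
def SetLE (P Q : Set (Distr α)) : Prop :=
  ∀ Δ' ∈ Q, ∃ Δ'' ∈ P, DistLE Δ'' Δ'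

/-- `[F]`: the `≤_Σ`-minimal members of a set of distributions. -/
def MinimalD (F : Set (Distr α)) : Set (Distr α) :=
  {Δ' | Δ' ∈ F ∧ ∀ Δ'' ∈ F, DistLE Δ'' Δ' → DistLE Δ' Δ''}

/-- `Δ'` is obtained from `Δ` by merging exactly two components `S ≠ T`
(and keeping only the maximal sub-alphabets); the members of `⊥(Δ)`. -/
def MinMergedFrom (Δ' Δ : Distr α) : Prop :=
  ∃ S ∈ Δ.comps, ∃ T ∈ Δ.comps, S ≠ T ∧
    Δ'.comps = MaximalMem ((Δ.comps \ {S, T}) ∪ {S ∪ T})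

/-- The set `A(Δ)` of shared symbols of a distribution. -/
def SharedSyms (Δ : Distr α) : Set α :=
  {a | ∃ S ∈ Δ.comps, ∃ T ∈ Δ.comps, S ≠ T ∧ a ∈ S ∧ a ∈ T}

/-- The substitution of `Δ'` into the component `C` of `Δ''` yields `Δs`:
`Δs` is obtained from the components of `Δ''` other than `C` together with the
intersections `C ∩ S` for components `S` of `Δ'`, keeping only the maximal
non-empty members. -/
def SubstResult (Δ' Δ'' : Distr α) (C : Set α) (Δs : Distr α) : Prop :=
  Δs.comps =
    MaximalMem {T : Set α |
      T.Nonempty ∧ (T ∈ Δ''.comps \ {C} ∨ ∃ S ∈ Δ'.comps, T = C ∩ S)}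

/-- One swap of two adjacent symbols forming a pair in `I`. -/
def SwapStep (I : Set (α × α)) (s t : List α) : Prop :=
  ∃ (u v : List α) (a b : α),
    (a, b) ∈ I ∧ s = u ++ a :: b :: v ∧ t = u ++ b :: a :: v

/-- Trace equivalence with respect to `I`: a finite sequence of swaps of
adjacent independent symbols. -/
def TraceEquiv (I : Set (α × α)) : List α → List α → Prop :=
  Relation.ReflTransGen (SwapStep I)

/-- `L` is trace-closed with respect to `I`. -/
def TraceClosed (I : Set (α × α)) (L : Set (List α)) : Prop :=
  L = {t | ∃ s ∈ L, TraceEquiv I s t}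

/-- The map `N` determined by the enumeration `c` of the components of a
distribution: `N(a) = {i : a ∉ Σ_i}`. -/
def Nmap {n : ℕ} (c : Fin n → Set α) (a : α) : Set (Fin n) :=
  {i | a ∉ c i}

/-- A simple path from `x` to `y` in the graph `(Σ, D)`: a list of pairwise
distinct symbols, starting at `x`, ending at `y`, with consecutive symbols
related by `D`. -/
def IsSimplePath (D : Set (α × α)) (p : List α) (x y : α) : Prop :=
  p.Nodup ∧ p.head? = some x ∧ p.getLast? = some y ∧
    p.Chain' (fun a b => (a, b) ∈ D)

/-- `Cr_D(S, y)` (with `N` given by the enumeration `c`): the set of indices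
`i` such that some simple path `p` from some `x ∈ S` to `y` in `(Σ, D)`
satisfies `i ∈ ⋂_{a ∈ p.dropLast} N(a)`. -/
def CrSet {n : ℕ} (c : Fin n → Set α) (D : Set (α × α)) (S : Set α) (y : α) :
    Set (Fin n) :=
  {i | ∃ x ∈ S, ∃ p : List α,
    IsSimplePath D p x y ∧ ∀ a ∈ p.dropLast, i ∈ Nmap c a}

/-- The smallest set of distributions containing `Q` and closed under
substitution. -/
inductive SubstClosure (Q : Set (Distr α)) : Distr α → Prop
  | base (Δ' : Distr α) (h : Δ' ∈ Q) : SubstClosure Q Δ'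
  | step (Δ' Δ'' Δs : Distr α) (C : Set α)
      (h1 : SubstClosure Q Δ') (h2 : SubstClosure Q Δ'')
      (hC : C ∈ Δ''.comps) (hA : SharedSyms Δ' ⊆ C)
      (hs : SubstResult Δ' Δ'' C Δs) : SubstClosure Q Δs

end Defs

section Count

variable {α : Type} [Fintype α] [DecidableEq α]

/-- `L(Σ_j)` (with `j` 0-indexed, so the paper's exponent `j+1` is `j+2`
here): all strings containing exactly one occurrence of each `σ_i ∈ Σ_j` and
exactly `j+2` occurrences of each `σ_i ∉ Σ_j`. -/
def Lword {m : ℕ} (σ : Fin m → α) (Sj : Set α) (j : ℕ) : Set (List α) :=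
  {s | ∀ i : Fin m,
    (σ i ∈ Sj → s.count (σ i) = 1) ∧ (σ i ∉ Sj → s.count (σ i) = j + 2)}

/-- The candidate counter example `L_cand = ⋃_j L(Σ_j)`, relative to an
enumeration `c` of the components and an enumeration `σ` of the alphabet. -/
def Lcand {n m : ℕ} (c : Fin n → Set α) (σ : Fin m → α) : Set (List α) :=
  ⋃ j : Fin n, Lword σ (c j) (j : ℕ)

end Count

section Aux

variable {α : Type} [Fintype α]

lemma projA_nil (S : Set α) : projA S ([] : List α) = [] := rfl

lemma projA_cons_mem (S : Set α) {x : α} (h : x ∈ S) (l : List α) :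
    projA S (x :: l) = x :: projA S l := by
  simp [projA, List.filter_cons, h, decide_eq_true_eq]

lemma projA_cons_not_mem (S : Set α) {x : α} (h : x ∉ S) (l : List α) :
    projA S (x :: l) = projA S l := by
  simp [projA, List.filter_cons, h, decide_eq_true_eq]

lemma mem_projA {S : Set α} {x : α} {l : List α} :
    x ∈ projA S l ↔ x ∈ l ∧ x ∈ S := by
  simp [projA, List.mem_filter, decide_eq_true_eq]

lemma projA_eq_self {S : Set α} {l : List α} (h : ∀ x ∈ l, x ∈ S) :
    projA S l = l := by
  apply List.filter_eq_self.mpr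
  intro x hx
  simpa [decide_eq_true_eq] using h x hx

lemma decomp_pair_iff (Δ : Distr α) (a b : α) :
    Decomposable {[a, b]} Δ ↔ (a, b) ∈ DepRel Δ := by
  constructor
  · intro hd
    by_contra hnd
    simp only [DepRel, Set.mem_setOf_eq] at hnd
    push_neg at hnd
    -- a ≠ b, since some component contains a
    have hab : a ≠ b := by
      intro hab
      obtain ⟨S, hS, haS⟩ := Δ.comps_cover a
      exact hnd S hS haS (hab ▸ haS)
    -- [b, a] is in the synchronous product
    have hmem : [b, a] ∈ ⋂ S ∈ Δ.comps, projA S ⁻¹' (projA S '' ({[a, b]} : Set (List α))) := by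
      simp only [Set.mem_iInter, Set.mem_preimage, Set.mem_image, Set.mem_singleton_iff]
      intro S hS
      refine ⟨[a, b], rfl, ?_⟩
      by_cases haS : a ∈ S <;> by_cases hbS : b ∈ S
      · exact absurd hbS (hnd S hS haS)
      · simp [projA_cons_mem S haS, projA_cons_not_mem S hbS, projA_nil]
      · simp [projA_cons_mem S hbS, projA_cons_not_mem S haS, projA_nil]
      · simp [projA_cons_not_mem S haS, projA_cons_not_mem S hbS, projA_nil]
    rw [← hd] at hmem
    simp only [Set.mem_singleton_iff] at hmem
    have : b = a ∧ a = b := by simpa using hmem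
    exact hab this.2
  · rintro ⟨S₀, hS₀, haS₀, hbS₀⟩
    apply Set.Subset.antisymm
    · intro s hs
      simp only [Set.mem_iInter, Set.mem_preimage]
      intro S hS
      exact ⟨s, hs, rfl⟩
    · intro s hs
      simp only [Set.mem_iInter, Set.mem_preimage, Set.mem_image,
        Set.mem_singleton_iff] at hs ⊢
      -- every symbol of s is a or b
      have hall : ∀ x ∈ s, x ∈ ({a, b} : Set α) := by
        intro x hx
        by_contra hxab
        obtain ⟨S, hS, hxS⟩ := Δ.comps_cover x
        obtain ⟨t, ht, hts⟩ := hs S hS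
        subst ht
        have : x ∈ projA S s := mem_projA.mpr ⟨hx, hxS⟩
        rw [← hts] at this
        have := (mem_projA.mp this).1
        simp only [List.mem_cons, List.not_mem_nil, or_false] at this
        rcases this with h | h <;> exact hxab (by simp [h])
      obtain ⟨t, ht, hts⟩ := hs S₀ hS₀
      subst ht
      have h1 : projA S₀ [a, b] = [a, b] := by
        apply projA_eq_self
        intro x hx
        simp only [List.mem_cons, List.not_mem_nil, or_false] at hx
        rcases hx with h | h <;> simp [h, haS₀, hbS₀]
      have h2 : projA S₀ s = s := by
        apply projA_eq_self
        intro x hx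
        have := hall x hx
        simp only [Set.mem_insert_iff, Set.mem_singleton_iff] at this
        rcases this with rfl | rfl <;> assumption
      rw [h1, h2] at hts
      exact hts.symm

end Aux

/-- If `P` is a reduction of `Δ`, then
`I_Δ = ⋃_{Δ' ∈ P} I_{Δ'}` (equivalently, `D_Δ = ⋂_{Δ' ∈ P} D_{Δ'}`). -/
theorem statement_16 {α : Type} [Fintype α] (Δ : Distr α) (P : Set (Distr α))
    (h : IsReduction P Δ) :
    (IndepRel Δ = ⋃ Δ' ∈ P, IndepRel Δ') ∧
    (DepRel Δ = ⋂ Δ' ∈ P, DepRel Δ') := by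
  obtain ⟨-, -, hiff⟩ := h
  have key : ∀ a b : α, (a, b) ∈ DepRel Δ ↔ ∀ Δ' ∈ P, (a, b) ∈ DepRel Δ' := by
    intro a b
    rw [← decomp_pair_iff, hiff]
    constructor
    · intro h' Δ' hΔ'
      exact (decomp_pair_iff Δ' a b).mp (h' Δ' hΔ')
    · intro h' Δ' hΔ'
      exact (decomp_pair_iff Δ' a b).mpr (h' Δ' hΔ')
  constructor
  · ext ⟨a, b⟩
    have hk := key a b
    constructor
    · intro hn
      have h2 : ¬ ∀ Δ' ∈ P, (a, b) ∈ DepRel Δ' := fun hh => hn (hk.mpr hh)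
      push_neg at h2
      obtain ⟨Δ', hΔ', hnd⟩ := h2
      exact Set.mem_iUnion₂.mpr ⟨Δ', hΔ', hnd⟩
    · intro hu
      obtain ⟨Δ', hΔ', hnd⟩ := Set.mem_iUnion₂.mp hu
      intro hd
      exact hnd (hk.mp hd Δ' hΔ')
  · ext ⟨a, b⟩
    simp only [Set.mem_iInter]
    exact key a b
end

section
/- Let Δ be a distribution of Σ and let P, Q ∈ S_Δ with |P| ≥ 2. If P ≤_Δ Q and Q is a reduction of Δ, then P is also a reduction of Δ. -/
section Aux

variable {α : Type} [Fintype α]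

lemma projA_projA {S T : Set α} (h : S ⊆ T) (s : List α) :
    projA S (projA T s) = projA S s := by
  unfold projA
  rw [List.filter_filter]
  apply List.filter_congr
  intro a _
  by_cases hS : a ∈ S
  · have hT : a ∈ T := h hS
    simp [hS, hT]
  · simp [hS]

lemma decomp_mono {Δ Δ' : Distr α} (h : DistLE Δ Δ') {L : Set (List α)}
    (hL : Decomposable L Δ) : Decomposable L Δ' := by
  apply Set.Subset.antisymm
  · intro w hw
    simp only [Set.mem_iInter]
    intro T _
    exact ⟨w, hw, rfl⟩
  · intro w hw
    rw [hL]
    simp only [Set.mem_iInter] at hw ⊢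
    intro S hS
    obtain ⟨T, hT, hST⟩ := h S hS
    obtain ⟨u, hu, hproj⟩ := hw T hT
    refine ⟨u, hu, ?_⟩
    calc projA S u = projA S (projA T u) := (projA_projA hST u).symm
    _ = projA S (projA T w) := by rw [hproj]
    _ = projA S w := projA_projA hST w

lemma exists_maximal_above (F : Set (Set α)) {S : Set α} (hS : S ∈ F) :
    ∃ U ∈ MaximalMem F, S ⊆ U := by
  have hfin : ({U ∈ F | S ⊆ U} : Set (Set α)).Finite := Set.toFinite _
  obtain ⟨U, hU, hmax⟩ := Set.Finite.exists_maximalFor id _ hfin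
    ⟨S, hS, subset_rfl⟩
  refine ⟨U, ⟨hU.1, ?_⟩, hU.2⟩
  intro V hV hUV
  exact Set.Subset.antisymm hUV (hmax ⟨hV, hU.2.trans hUV⟩ hUV)

lemma mergedFrom_distLE {Δ' Δ : Distr α} (h : MergedFrom Δ' Δ) :
    DistLE Δ Δ' := by
  obtain ⟨-, part, hne, hsub, hdisj, hcov, -, hcomps⟩ := h
  intro S hS
  obtain ⟨B, hB, hSB⟩ := hcov S hS
  have hmem : ⋃₀ B ∈ {U : Set α | ∃ B ∈ part, U = ⋃₀ B} := ⟨B, hB, rfl⟩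
  obtain ⟨U, hU, hsubU⟩ := exists_maximal_above _ hmem
  refine ⟨U, by rw [hcomps]; exact hU, ?_⟩
  exact (Set.subset_sUnion_of_mem hSB).trans hsubU

lemma mergedFrom_card {Δ' Δ : Distr α} (h : MergedFrom Δ' Δ) :
    Δ'.comps.ncard < Δ.comps.ncard := by
  classical
  obtain ⟨-, part, hne, hsub, hdisj, hcov, ⟨B0, hB0, S, hSB0, T, hTB0, hST⟩,
    hcomps⟩ := h
  -- instead define via choice directly
  have hpick : ∀ B ∈ part, ∃ x ∈ B, x ∈ Δ.comps ∧ (B = B0 → x = S) := by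
    intro B hB
    by_cases hBB0 : B = B0
    · subst hBB0
      exact ⟨S, hSB0, hsub B hB hSB0, fun _ => rfl⟩
    · obtain ⟨x, hx⟩ := hne B hB
      exact ⟨x, hx, hsub B hB hx, fun hc => absurd hc hBB0⟩
  choose g hg1 hg2 hg3 using hpick
  -- the function B ↦ g B maps part injectively into Δ.comps \ {T}
  have hT' : T ∈ Δ.comps := hsub B0 hB0 hTB0
  have hmapsto : ∀ B (hB : B ∈ part), g B hB ∈ Δ.comps \ {T} := by
    intro B hB
    refine ⟨hg2 B hB, ?_⟩
    intro hgT
    simp only [Set.mem_singleton_iff] at hgT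
    by_cases hBB0 : B = B0
    · have := hg3 B hB hBB0
      rw [this] at hgT
      exact hST hgT
    · have hd := hdisj B hB B0 hB0 hBB0
      exact (Set.disjoint_left.mp hd (hg1 B hB)) (hgT ▸ hTB0)
  have hinjcard : part.ncard ≤ (Δ.comps \ {T}).ncard := by
    have : ∀ B ∈ part, (fun B => if hB : B ∈ part then g B hB else ∅) B ∈
        Δ.comps \ {T} := by
      intro B hB; simp only [dif_pos hB]; exact hmapsto B hB
    refine Set.ncard_le_ncard_of_injOn _ this ?_ (Set.toFinite _)
    intro B hB C hC hgBC
    simp only [dif_pos hB, dif_pos hC] at hgBC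
    by_contra hne'
    have hd := hdisj B hB C hC hne'
    exact Set.disjoint_left.mp hd (hg1 B hB) (hgBC ▸ hg1 C hC)
  have hlt : (Δ.comps \ {T}).ncard < Δ.comps.ncard :=
    Set.ncard_diff_singleton_lt_of_mem hT' (Set.toFinite _)
  -- Δ'.comps has at most as many elements as part
  have himg : Δ'.comps ⊆ (fun B : Set (Set α) => ⋃₀ B) '' part := by
    rw [hcomps]
    intro U hU
    obtain ⟨B, hB, hUB⟩ := hU.1
    exact ⟨B, hB, hUB.symm⟩
  have h1 : Δ'.comps.ncard ≤ ((fun B : Set (Set α) => ⋃₀ B) '' part).ncard :=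
    Set.ncard_le_ncard himg (Set.toFinite _)
  have h2 : ((fun B : Set (Set α) => ⋃₀ B) '' part).ncard ≤ part.ncard :=
    Set.ncard_image_le (Set.toFinite _)
  omega

end Aux

/-- For `P, Q ∈ S_Δ` with `|P| ≥ 2`, if `P ≤_Δ Q` and `Q`
is a reduction of `Δ`, then `P` is also a reduction of `Δ`. -/
theorem statement_18 {α : Type} [Fintype α] (Δ : Distr α)
    (P Q : Set (Distr α))
    (hP : MemS Δ P) (hQ : MemS Δ Q) (hcard : 2 ≤ P.ncard)
    (hPQ : SetLE P Q) (hred : IsReduction Q Δ) :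
    IsReduction P Δ := by
  refine ⟨hcard, fun Δ' hΔ' => mergedFrom_card (hP.1 Δ' hΔ'), fun L => ?_⟩
  constructor
  · intro hL Δ' hΔ'
    exact decomp_mono (mergedFrom_distLE (hP.1 Δ' hΔ')) hL
  · intro h
    apply (hred.2.2 L).mpr
    intro Δ'' hΔ''
    obtain ⟨Δ', hΔ'P, hle⟩ := hPQ Δ'' hΔ''
    exact decomp_mono hle (h Δ' hΔ'P)
end
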